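/- For every integer n ≥ 4, the dihedral group D₂ₙ of order 2n (with presentation ⟨a, b | aⁿ = 1, b² = 1, b⁻¹ab = a⁻¹⟩) is not a Cayley integral group. -/

import Mathlib

open scoped Classical

/-- The adjacency matrix of the undirected Cayley graph `Cay(G,S)`:
the `(a,b)` entry is `1` if `a * b⁻¹ ∈ S` and `0` otherwise. -/
noncomputable def cayleyAdjMatrix {G : Type*} [Group G] [Fintype G] (S : Set G) :
    Matrix G G ℝ :=
  Matrix.of fun a b => if a * b⁻¹ ∈ S then (1 : ℝ) else 0

/-- A finite group `G` is *Cayley integral* if for every subset `S ⊆ G` with `1 ∉ S` and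
`S = S⁻¹`, every eigenvalue of the adjacency matrix of the Cayley graph `Cay(G,S)`
is an integer. -/
def IsCayleyIntegral (G : Type*) [Group G] [Fintype G] : Prop :=
  ∀ S : Set G, (1 : G) ∉ S → (∀ s ∈ S, s⁻¹ ∈ S) →
    ∀ μ ∈ spectrum ℝ (cayleyAdjMatrix S), ∃ k : ℤ, μ = (k : ℝ)

/-- For `n ≥ 4`, the dihedral group of order `2n` is not Cayley integral. -/
theorem dihedral_not_cayley_integral (n : ℕ) (hn : 4 ≤ n) :
    letI : NeZero n := ⟨by omega⟩
    ¬ IsCayleyIntegral (DihedralGroup n) := by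
  haveI : NeZero n := ⟨by omega⟩
  show ¬ IsCayleyIntegral (DihedralGroup n)
  letI : DecidableEq (DihedralGroup n) := fun a b => Classical.propDecidable (a = b)
  intro hCI
  have hn0 : (0:ℝ) < n := by positivity
  have hπ := Real.pi_pos
  set θ : ℝ := Real.pi / n with hθdef
  set μ : ℝ := 2 * Real.cos θ with hμdef
  set c : ℤ → ℝ := fun m => Real.cos (m * θ) with hcdef
  -- periodicity of c
  have c_per : ∀ (m k : ℤ), c (m + 2*n*k) = c m := by
    intro m k
    have h1 : ((m + 2*(n:ℤ)*k : ℤ):ℝ) * θ = m*θ + k*(2*Real.pi) := by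
      push_cast
      field_simp [hθdef]
      have hnθ : (n:ℝ) * θ = Real.pi := by rw [hθdef]; field_simp
      linear_combination (2 * (k:ℝ)) * hnθ
    simp only [hcdef, h1, Real.cos_add_int_mul_two_pi]
  -- consequence: c is n-periodic-up-to a shift by 2n in argument via divisibility
  have c_congr : ∀ m m' : ℤ, (n:ℤ) ∣ (m - m') → c (2*m) = c (2*m') ∧ c (2*m - 1) = c (2*m' - 1) := by
    intro m m' ⟨k, hk⟩
    have h1 : 2*m = 2*m' + 2*n*k := by linarith
    have h2 : 2*m - 1 = (2*m' - 1) + 2*n*k := by linarith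
    exact ⟨h1 ▸ c_per (2*m') k, h2 ▸ c_per (2*m'-1) k⟩
  have val_dvd : ∀ (i : ZMod n) (m : ℤ), ((m : ZMod n) = i) → (n:ℤ) ∣ ((i.val : ℤ) - m) := by
    intro i m hm
    have : (((i.val : ℤ) - m : ℤ) : ZMod n) = 0 := by
      push_cast
      simp [ZMod.natCast_val, ZMod.cast_id, hm]
    exact (ZMod.intCast_zmod_eq_zero_iff_dvd _ _).mp this
  -- the connection set: two reflections
  set S : Set (DihedralGroup n) := {DihedralGroup.sr 0, DihedralGroup.sr 1} with hSdef
  have hS1 : (1 : DihedralGroup n) ∉ S := by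
    simp [hSdef, DihedralGroup.one_def, -DihedralGroup.r_zero]
  have hSinv : ∀ s ∈ S, s⁻¹ ∈ S := by
    rintro s (rfl | rfl)
    · left; rfl
    · right; rfl
  -- the eigenvector
  set v : DihedralGroup n → ℝ := fun g =>
    match g with
    | DihedralGroup.r j => c (2 * j.val)
    | DihedralGroup.sr j => c (2 * j.val - 1) with hvdef
  -- sum decomposition over the dihedral group
  let e : (ZMod n) ⊕ (ZMod n) ≃ DihedralGroup n :=
    { toFun := Sum.elim DihedralGroup.r DihedralGroup.sr
      invFun := fun g => match g with
        | DihedralGroup.r j => Sum.inl j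
        | DihedralGroup.sr j => Sum.inr j
      left_inv := by rintro (j | j) <;> rfl
      right_inv := by rintro (j | j) <;> rfl }
  have sum_dg : ∀ f : DihedralGroup n → ℝ,
      (∑ g, f g) = (∑ j : ZMod n, f (DihedralGroup.r j)) + ∑ j : ZMod n, f (DihedralGroup.sr j) := by
    intro f
    rw [← e.sum_comp f, Fintype.sum_sum_type]
    rfl
  have hone : (1 : ZMod n) ≠ 0 := by
    haveI : Fact (1 < n) := ⟨by omega⟩
    exact one_ne_zero
  -- trig identity
  have key : ∀ x : ℝ, Real.cos (x - θ) + Real.cos (x + θ) = μ * Real.cos x := by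
    intro x
    rw [Real.cos_sub, Real.cos_add, hμdef]
    ring
  have hione : ∀ i : ZMod n, i ≠ 1 + i := fun i h => hone (right_eq_add.mp h)
  have hione' : ∀ i : ZMod n, i ≠ i - 1 := by
    intro i h
    exact hone (by simpa using add_eq_left.mp (eq_sub_iff_add_eq.mp h))
  -- trig identities for c
  have trig1 : ∀ m : ℤ, c (m - 1) + c (m + 1) = μ * c m := by
    intro m
    simp only [hcdef]
    push_cast
    rw [show ((m:ℝ) - 1) * θ = (m:ℝ) * θ - θ by ring,
      show ((m:ℝ) + 1) * θ = (m:ℝ) * θ + θ by ring]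
    exact key _
  have trig2 : ∀ m : ℤ, c m + c (m - 2) = μ * c (m - 1) := by
    intro m
    simp only [hcdef]
    push_cast
    rw [show ((m:ℝ)) * θ = ((m:ℝ) - 1) * θ + θ by ring,
      show ((m:ℝ) - 2) * θ = ((m:ℝ) - 1) * θ - θ by ring, add_comm]
    exact key _
  -- the eigenvalue equation
  have hAv : (cayleyAdjMatrix S).mulVec v = μ • v := by
    funext g
    simp only [Matrix.mulVec, dotProduct, cayleyAdjMatrix, Matrix.of_apply]
    rw [sum_dg]
    cases g with
    | r i =>
      have h0 : (∑ j : ZMod n,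
          (@ite ℝ (DihedralGroup.r i * (DihedralGroup.r j)⁻¹ ∈ S) (Classical.propDecidable _) 1 0) * v (DihedralGroup.r j)) = 0 := by
        refine Finset.sum_eq_zero fun j _ => ?_
        have h1 : DihedralGroup.r i * (DihedralGroup.r j)⁻¹ = DihedralGroup.r (i + -j) := rfl
        simp [h1, hSdef]
      have hmem : ∀ j : ZMod n,
          (DihedralGroup.r i * (DihedralGroup.sr j)⁻¹ ∈ S) ↔ (j = i ∨ j = 1 + i) := by
        intro j
        have h1 : DihedralGroup.r i * (DihedralGroup.sr j)⁻¹ = DihedralGroup.sr (j - i) := rfl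
        simp only [h1, hSdef, Set.mem_insert_iff, Set.mem_singleton_iff, DihedralGroup.sr.injEq,
          sub_eq_zero, sub_eq_iff_eq_add, zero_add]
      have h2 : (∑ j : ZMod n,
          (@ite ℝ (DihedralGroup.r i * (DihedralGroup.sr j)⁻¹ ∈ S) (Classical.propDecidable _) 1 0) * v (DihedralGroup.sr j))
          = v (DihedralGroup.sr i) + v (DihedralGroup.sr (1 + i)) := by
        simp only [hmem]
        have split : ∀ j : ZMod n,
            (if j = i ∨ j = 1 + i then (1:ℝ) else 0) * v (DihedralGroup.sr j)
            = (if j = i then v (DihedralGroup.sr j) else 0)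
              + (if j = 1 + i then v (DihedralGroup.sr j) else 0) := by
          intro j
          rcases eq_or_ne j i with ha | ha
          · subst ha
            simp [(hione j)]
          · rcases eq_or_ne j (1 + i) with hb | hb
            · subst hb
              simp [ha]
            · simp [ha, hb]
        simp only [split, Finset.sum_add_distrib, Finset.sum_ite_eq', Finset.mem_univ, if_true]
      rw [h0, h2, zero_add]
      -- now the trig computation
      have hval : c (2 * ((1 + i : ZMod n).val : ℤ) - 1) = c (2 * ((i.val : ℤ) + 1) - 1) := by
        refine (c_congr _ _ ?_).2
        refine val_dvd (1 + i) ((i.val : ℤ) + 1) ?_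
        push_cast
        simp [ZMod.natCast_val, ZMod.cast_id, add_comm]
      show c (2 * (i.val:ℤ) - 1) + c (2 * ((1+i : ZMod n).val : ℤ) - 1) = μ • c (2 * (i.val:ℤ))
      rw [hval, smul_eq_mul, show 2 * ((i.val:ℤ) + 1) - 1 = 2 * (i.val:ℤ) + 1 by ring]
      exact trig1 _
    | sr i =>
      have h0 : (∑ j : ZMod n,
          (@ite ℝ (DihedralGroup.sr i * (DihedralGroup.sr j)⁻¹ ∈ S) (Classical.propDecidable _) 1 0) * v (DihedralGroup.sr j)) = 0 := by
        refine Finset.sum_eq_zero fun j _ => ?_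
        have h1 : DihedralGroup.sr i * (DihedralGroup.sr j)⁻¹ = DihedralGroup.r (j - i) := rfl
        simp [h1, hSdef]
      have hmem : ∀ j : ZMod n,
          (DihedralGroup.sr i * (DihedralGroup.r j)⁻¹ ∈ S) ↔ (j = i ∨ j = i - 1) := by
        intro j
        have h1 : DihedralGroup.sr i * (DihedralGroup.r j)⁻¹ = DihedralGroup.sr (i - j) := by
          show DihedralGroup.sr i * DihedralGroup.r (-j) = _
          rw [DihedralGroup.sr_mul_r, ← sub_eq_add_neg]
        simp only [h1, hSdef, Set.mem_insert_iff, Set.mem_singleton_iff, DihedralGroup.sr.injEq,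
          sub_eq_zero, sub_eq_iff_eq_add, zero_add]
        constructor
        · rintro (h | h)
          · exact Or.inl h.symm
          · exact Or.inr (by rw [h]; ring)
        · rintro (h | h)
          · exact Or.inl h.symm
          · exact Or.inr (by rw [h]; ring)
      have h2 : (∑ j : ZMod n,
          (@ite ℝ (DihedralGroup.sr i * (DihedralGroup.r j)⁻¹ ∈ S) (Classical.propDecidable _) 1 0) * v (DihedralGroup.r j))
          = v (DihedralGroup.r i) + v (DihedralGroup.r (i - 1)) := by
        simp only [hmem]
        have split : ∀ j : ZMod n,
            (if j = i ∨ j = i - 1 then (1:ℝ) else 0) * v (DihedralGroup.r j)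
            = (if j = i then v (DihedralGroup.r j) else 0)
              + (if j = i - 1 then v (DihedralGroup.r j) else 0) := by
          intro j
          rcases eq_or_ne j i with ha | ha
          · subst ha
            simp [(hione' j)]
          · rcases eq_or_ne j (i - 1) with hb | hb
            · subst hb
              simp [ha]
            · simp [ha, hb]
        simp only [split, Finset.sum_add_distrib, Finset.sum_ite_eq', Finset.mem_univ, if_true]
      rw [h0, h2, add_zero]
      have hval : c (2 * (((i - 1 : ZMod n)).val : ℤ)) = c (2 * ((i.val : ℤ) - 1)) := by
        refine (c_congr _ _ ?_).1
        refine val_dvd (i - 1) ((i.val : ℤ) - 1) ?_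
        push_cast
        simp [ZMod.natCast_val, ZMod.cast_id]
      show c (2 * (i.val:ℤ)) + c (2 * (((i - 1 : ZMod n)).val : ℤ)) = μ • c (2 * (i.val:ℤ) - 1)
      rw [hval, smul_eq_mul, show 2 * ((i.val:ℤ) - 1) = 2 * (i.val:ℤ) - 2 by ring]
      exact trig2 _
  -- v is nonzero
  have hv0 : v (DihedralGroup.r 0) = 1 := by
    show c (2 * ((0 : ZMod n).val : ℤ)) = 1
    simp [hcdef, ZMod.val_zero]
  -- μ is in the spectrum
  have hspec : μ ∈ spectrum ℝ (cayleyAdjMatrix S) := by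
    rw [spectrum.mem_iff]
    intro hU
    have hMv : (algebraMap ℝ (Matrix (DihedralGroup n) (DihedralGroup n) ℝ) μ
        - cayleyAdjMatrix S).mulVec v = 0 := by
      rw [Matrix.sub_mulVec, hAv, Algebra.algebraMap_eq_smul_one, Matrix.smul_mulVec,
        Matrix.one_mulVec, sub_self]
    set M := algebraMap ℝ (Matrix (DihedralGroup n) (DihedralGroup n) ℝ) μ - cayleyAdjMatrix S
    have hv : v = 0 := by
      have h1 := hU.unit.inv_mul
      rw [hU.unit_spec] at h1
      calc v = ((↑hU.unit⁻¹ : Matrix (DihedralGroup n) (DihedralGroup n) ℝ) * M).mulVec v := by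
              rw [h1, Matrix.one_mulVec]
        _ = (↑hU.unit⁻¹ : Matrix (DihedralGroup n) (DihedralGroup n) ℝ).mulVec (M.mulVec v) := by
              rw [← Matrix.mulVec_mulVec]
        _ = 0 := by rw [hMv, Matrix.mulVec_zero]
    rw [hv] at hv0
    simp at hv0
  -- μ is not an integer: 1 < μ < 2
  obtain ⟨k, hk⟩ := hCI S hS1 hSinv μ hspec
  have hθpos : 0 < θ := by positivity
  have hθle : θ < Real.pi / 3 := by
    rw [hθdef]
    apply div_lt_div_of_pos_left hπ (by norm_num)
    exact_mod_cast by omega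
  have h1 : Real.cos (Real.pi / 3) < Real.cos θ := by
    apply Real.cos_lt_cos_of_nonneg_of_le_pi hθpos.le _ hθle
    linarith
  have h2 : Real.cos θ < 1 := by
    have := Real.cos_lt_cos_of_nonneg_of_le_pi le_rfl (by
      rw [hθdef]
      apply div_le_self hπ.le
      exact_mod_cast by omega) hθpos
    simpa using this
  rw [Real.cos_pi_div_three] at h1
  have hμ1 : 1 < μ := by rw [hμdef]; linarith
  have hμ2 : μ < 2 := by rw [hμdef]; linarith
  rw [hk] at hμ1 hμ2
  have : (1 : ℤ) < k := by exact_mod_cast hμ1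
  have : k < 2 := by exact_mod_cast hμ2
  omega
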